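/- arXiv:2402.00804 — 3 statements merged into one kernel-verified Lean document; each statement's English description precedes it below -/
import Mathlib

section
/- Let a finite p-group R act on a finite group X = M_1 × ⋯ × M_t with each M_i isomorphic to a fixed group M and t > 1, and assume R transitively permutes the factors M_i. Let G = X ⋊ R be the corresponding semidirect product. Then R is subnormal in G if and only if M is a p-group. -/
/-- `H` is normal in `K` (both subgroups of an ambient group `G`). -/
def NormalIn {G : Type*} [Group G] (H K : Subgroup G) : Prop :=
  H ≤ K ∧ ∀ k ∈ K, ∀ h ∈ H, k * h * k⁻¹ ∈ H

/-- `H` is subnormal in `K`: there is a chain `H = c 0 ⊴ c 1 ⊴ ⋯ ⊴ c n = K`. -/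
def Subnormal {G : Type*} [Group G] (H K : Subgroup G) : Prop :=
  ∃ (n : ℕ) (c : Fin (n + 1) → Subgroup G),
    c 0 = H ∧ c (Fin.last n) = K ∧ ∀ i : Fin n, NormalIn (c i.castSucc) (c i.succ)

/-- `R` is weakly subnormal in `G`: not subnormal in `G`, but subnormal in every
proper subgroup of `G` containing it. -/
def WeaklySubnormal {G : Type*} [Group G] (R : Subgroup G) : Prop :=
  ¬ Subnormal R ⊤ ∧ ∀ H : Subgroup G, R ≤ H → H ≠ ⊤ → Subnormal R H

/-- `O_p(G)`: the largest normal `p`-subgroup of `G`. -/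
def pCore (p : ℕ) (G : Type*) [Group G] : Subgroup G :=
  sSup {H : Subgroup G | H.Normal ∧ IsPGroup p H}

/-- `O_{p'}(G)`: the largest normal subgroup of `G` of order coprime to `p`. -/
def pPrimeCore (p : ℕ) (G : Type*) [Group G] : Subgroup G :=
  sSup {H : Subgroup G | H.Normal ∧ Nat.Coprime (Nat.card H) p}

theorem normal_sSup {G : Type*} [Group G] {S : Set (Subgroup G)}
    (h : ∀ H ∈ S, H.Normal) : (sSup S).Normal := by
  constructor
  intro x hx g
  have hle : sSup S ≤ (sSup S).comap ((MulAut.conj g).toMonoidHom) := by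
    refine sSup_le fun H hH => fun y hy => ?_
    have : g * y * g⁻¹ ∈ H := (h H hH).conj_mem y hy g
    exact Subgroup.mem_comap.mpr (by simpa using le_sSup hH this)
  simpa using hle hx

instance pCore_normal (p : ℕ) (G : Type*) [Group G] : (pCore p G).Normal :=
  normal_sSup fun _ hH => hH.1

instance pPrimeCore_normal (p : ℕ) (G : Type*) [Group G] : (pPrimeCore p G).Normal :=
  normal_sSup fun _ hH => hH.1

/-- `Z_p^*(G)`: the preimage in `G` of the center of `G / O_{p'}(G)`. -/
def pStarCenter (p : ℕ) (G : Type*) [Group G] : Subgroup G :=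
  (Subgroup.center (G ⧸ pPrimeCore p G)).comap (QuotientGroup.mk' (pPrimeCore p G))

/-- `x` is a `p`-element: its order is a power of `p`. -/
def IsPElement (p : ℕ) {G : Type*} [Group G] (x : G) : Prop :=
  ∃ n : ℕ, orderOf x = p ^ n

/-- A finite group is `p`-solvable iff every simple section is a `p`-group
or a `p'`-group (equivalent to the usual composition-factor definition). -/
def IsPSolvable (p : ℕ) (G : Type*) [Group G] : Prop :=
  ∀ (K : Subgroup G) (H : Subgroup K) [H.Normal],
    IsSimpleGroup (K ⧸ H) → IsPGroup p (K ⧸ H) ∨ Nat.Coprime (Nat.card (K ⧸ H)) p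

/-- The Frattini subgroup of a subgroup `Q ≤ G`, as a subgroup of `G`. -/
def frattiniIn {G : Type*} [Group G] (Q : Subgroup G) : Subgroup G :=
  (frattini Q).map Q.subtype

/-- An elementary abelian `q`-group. -/
def IsElementaryAbelian (q : ℕ) (Q : Type*) [Group Q] : Prop :=
  (∀ x y : Q, x * y = y * x) ∧ ∀ x : Q, x ^ q = 1

/-- A special `q`-group: elementary abelian, or `Φ(Q) = [Q,Q] = Z(Q)`. -/
def IsSpecial (q : ℕ) (Q : Type*) [Group Q] : Prop :=
  IsElementaryAbelian q Q ∨
    (frattini Q = commutator Q ∧ commutator Q = Subgroup.center Q)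

/-- A quasisimple group: perfect, and simple modulo its center. -/
def IsQuasisimple (Q : Type*) [Group Q] : Prop :=
  commutator Q = ⊤ ∧ IsSimpleGroup (Q ⧸ Subgroup.center Q)

/-- A component of `G`: a subnormal quasisimple subgroup. -/
def IsComponent {G : Type*} [Group G] (Q : Subgroup G) : Prop :=
  Subnormal Q ⊤ ∧ IsQuasisimple Q

/-- The layer `E(G)` of `G`: the subgroup generated by the components. -/
def layer (G : Type*) [Group G] : Subgroup G :=
  sSup {Q : Subgroup G | IsComponent Q}

/-- The Fitting subgroup `F(G)`: the largest normal nilpotent subgroup. -/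
def fitting (G : Type*) [Group G] : Subgroup G :=
  sSup {H : Subgroup G | H.Normal ∧ Group.IsNilpotent H}

section Aux

variable {G : Type*} [Group G]

theorem normalIn_refl (H : Subgroup G) : NormalIn H H :=
  ⟨le_rfl, fun k hk h hh => H.mul_mem (H.mul_mem hk hh) (H.inv_mem hk)⟩

theorem subnormal_refl (H : Subgroup G) : Subnormal H H :=
  ⟨0, fun _ => H, rfl, rfl, fun i => i.elim0⟩

theorem subnormal_cons {H K L : Subgroup G} (h1 : NormalIn H K) (h2 : Subnormal K L) :
    Subnormal H L := by
  obtain ⟨n, c, hc0, hcl, hstep⟩ := h2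
  refine ⟨n + 1, Fin.cons H c, Fin.cons_zero _ _, ?_, ?_⟩
  · have : Fin.last (n + 1) = (Fin.last n).succ := rfl
    rw [this, Fin.cons_succ, hcl]
  · intro i
    induction i using Fin.cases with
    | zero =>
      rw [Fin.castSucc_zero, Fin.cons_zero]
      have h1' : (0 : Fin (n + 1)).succ = Fin.succ 0 := rfl
      rw [h1', Fin.cons_succ, hc0]
      exact h1
    | succ j =>
      have e1 : (j.succ).castSucc = (j.castSucc).succ := (Fin.succ_castSucc j).symm
      rw [e1, Fin.cons_succ, Fin.cons_succ]
      exact hstep j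

/-- `O_p` relative to a subgroup `K`, as a subgroup of the ambient group. -/
def opIn (p : ℕ) (K : Subgroup G) : Subgroup G :=
  sSup {N : Subgroup G | NormalIn N K ∧ IsPGroup p N}

theorem opIn_le (p : ℕ) (K : Subgroup G) : opIn p K ≤ K :=
  sSup_le fun _ h => h.1.1

theorem conj_mem_opIn {p : ℕ} {K : Subgroup G} {k : G} (hk : k ∈ K) {x : G}
    (hx : x ∈ opIn p K) : k * x * k⁻¹ ∈ opIn p K := by
  have hle : opIn p K ≤ (opIn p K).comap ((MulAut.conj k).toMonoidHom) := by
    refine sSup_le fun N hN => fun y hy => ?_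
    have : k * y * k⁻¹ ∈ N := hN.1.2 k hk y hy
    exact Subgroup.mem_comap.mpr (by simpa using (show k * y * k⁻¹ ∈ opIn p K from le_sSup hN this))
  simpa using hle hx

theorem normalIn_opIn (p : ℕ) (K : Subgroup G) : NormalIn (opIn p K) K :=
  ⟨opIn_le p K, fun k hk x hx => conj_mem_opIn hk hx⟩

theorem isPGroup_opIn [Finite G] (p : ℕ) (K : Subgroup G) : IsPGroup p (opIn p K) := by
  haveI : Finite (Subgroup G) :=
    Finite.of_injective (fun H : Subgroup G => (H : Set G)) SetLike.coe_injective
  show IsPGroup p ↥(sSup {N : Subgroup G | NormalIn N K ∧ IsPGroup p N})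
  refine Set.Finite.induction_on_subset (motive := fun T _ => IsPGroup p ↥(sSup T : Subgroup G)) _
    (Set.toFinite {N : Subgroup G | NormalIn N K ∧ IsPGroup p N}) ?_ ?_
  · rw [sSup_empty]
    exact IsPGroup.of_bot
  · intro N T' hN hT'S hNT' ih
    rw [sSup_insert]
    refine IsPGroup.to_sup_of_normal_right' hN.2 ih ?_
    intro x hx
    have hxK : x ∈ K := hN.1.1 hx
    rw [Subgroup.mem_normalizer_iff]
    intro h
    have conj_mem : ∀ a ∈ K, ∀ y ∈ (sSup T' : Subgroup G), a * y * a⁻¹ ∈ (sSup T' : Subgroup G) := by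
      intro a ha y hy
      have hle : sSup T' ≤ (sSup T' : Subgroup G).comap ((MulAut.conj a).toMonoidHom) := by
        refine sSup_le fun N' hN' => fun z hz => ?_
        have : a * z * a⁻¹ ∈ N' := (hT'S hN').1.2 a ha z hz
        exact Subgroup.mem_comap.mpr (by simpa using le_sSup hN' this)
      simpa using hle hy
    constructor
    · exact fun hh => conj_mem x hxK h hh
    · intro hh
      have := conj_mem x⁻¹ (K.inv_mem hxK) _ hh
      have e : x⁻¹ * (x * h * x⁻¹) * x⁻¹⁻¹ = h := by group
      rwa [e] at this

theorem opIn_mono_of_normalIn [Finite G] {p : ℕ} {H K : Subgroup G} (h : NormalIn H K) :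
    opIn p H ≤ opIn p K := by
  refine le_sSup ?_
  refine ⟨⟨(opIn_le p H).trans h.1, ?_⟩, isPGroup_opIn p H⟩
  intro k hk x hx
  -- show conjugation by k ∈ K preserves opIn p H
  have hle : opIn p H ≤ (opIn p H).comap ((MulAut.conj k).toMonoidHom) := by
    refine sSup_le fun N hN => fun y hy => ?_
    -- N ∈ S_H; show k y k⁻¹ ∈ opIn p H by showing conj of N is in S_H
    have hmem : (N.map ((MulAut.conj k).toMonoidHom) : Subgroup G) ∈
        {N : Subgroup G | NormalIn N H ∧ IsPGroup p N} := by
      constructor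
      · constructor
        · rintro z hz
          rw [Subgroup.mem_map] at hz
          obtain ⟨y', hy', rfl⟩ := hz
          have : k * y' * k⁻¹ ∈ H := h.2 k hk y' (hN.1.1 hy')
          simpa using this
        · intro a ha z hz
          rw [Subgroup.mem_map] at hz ⊢
          obtain ⟨y', hy', rfl⟩ := hz
          have haH : k⁻¹ * a * k ∈ H := by
            have := h.2 k⁻¹ (K.inv_mem hk) a ha
            simpa using this
          have hy'' : (k⁻¹ * a * k) * y' * (k⁻¹ * a * k)⁻¹ ∈ N :=
            hN.1.2 _ haH y' hy'
          refine ⟨(k⁻¹ * a * k) * y' * (k⁻¹ * a * k)⁻¹, hy'', ?_⟩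
          simp only [MulEquiv.coe_toMonoidHom, MulAut.conj_apply]
          group
      · exact hN.2.map _
    have : k * y * k⁻¹ ∈ N.map ((MulAut.conj k).toMonoidHom) := by
      rw [Subgroup.mem_map]
      exact ⟨y, hy, by simp⟩
    exact Subgroup.mem_comap.mpr (by simpa using (show k * y * k⁻¹ ∈ opIn p H from le_sSup hmem this))
  simpa using hle hx

theorem le_opIn_of_subnormal [Finite G] {p : ℕ} {H : Subgroup G} (hH : IsPGroup p H) :
    ∀ (n : ℕ) (K : Subgroup G) (c : Fin (n + 1) → Subgroup G), c 0 = H → c (Fin.last n) = K →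
      (∀ i : Fin n, NormalIn (c i.castSucc) (c i.succ)) → H ≤ opIn p K := by
  intro n
  induction n with
  | zero =>
    intro K c h0 hl _
    have : H = K := by rw [← h0, ← hl]; rfl
    subst this
    exact le_sSup ⟨normalIn_refl H, hH⟩
  | succ n ih =>
    intro K c h0 hl hstep
    set H' : Subgroup G := c ((Fin.last n).castSucc) with hH'
    have h1 : H ≤ opIn p H' := by
      refine ih H' (fun i => c i.castSucc) ?_ rfl ?_
      · rw [← h0]; rfl
      · intro i
        show NormalIn (c (i.castSucc).castSucc) (c (i.succ).castSucc)
        have e : (i.succ).castSucc = (i.castSucc).succ := (Fin.succ_castSucc i).symm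
        rw [e]
        exact hstep i.castSucc
    have h2 : NormalIn H' K := by
      have := hstep (Fin.last n)
      rwa [show (Fin.last n).succ = Fin.last (n + 1) from rfl, hl] at this
    exact h1.trans (opIn_mono_of_normalIn h2)

theorem subnormal_top_of_normalizerCondition [Finite G] (hnc : NormalizerCondition G)
    (H : Subgroup G) : Subnormal H ⊤ := by
  suffices h : ∀ (k : ℕ) (H : Subgroup G), Nat.card G - Nat.card H = k → Subnormal H ⊤ from
    h _ H rfl
  intro k
  induction k using Nat.strong_induction_on with
  | _ k ih =>
    intro H hk
    by_cases htop : H = ⊤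
    · subst htop; exact subnormal_refl ⊤
    · have hlt : H < ⊤ := lt_top_iff_ne_top.mpr htop
      have hlt' : H < (Subgroup.normalizer (H : Set G)) := hnc H hlt
      have hcard : Nat.card H < Nat.card (Subgroup.normalizer (H : Set G)) := by
        have hn := Set.ncard_lt_ncard (SetLike.coe_ssubset_coe.mpr hlt') (Set.toFinite _)
        have e1 : Nat.card H = (H : Set G).ncard := Nat.card_coe_set_eq _
        have e2 : Nat.card (Subgroup.normalizer (H : Set G)) = ((Subgroup.normalizer (H : Set G)) : Set G).ncard :=
          Nat.card_coe_set_eq _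
        omega
      have hle : Nat.card (Subgroup.normalizer (H : Set G)) ≤ Nat.card G := Subgroup.card_le_card_group _
      have hdec : Nat.card G - Nat.card (Subgroup.normalizer (H : Set G)) < k := by
        rw [← hk]
        exact Nat.sub_lt_sub_left (lt_of_lt_of_le hcard hle) hcard
      have hsub : Subnormal (Subgroup.normalizer (H : Set G)) ⊤ := ih _ hdec (Subgroup.normalizer (H : Set G)) rfl
      refine subnormal_cons ⟨Subgroup.le_normalizer, ?_⟩ hsub
      intro n hn h hh
      exact (Subgroup.mem_normalizer_iff.mp hn h).mp hh

end Aux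

/-- **Lemma (wreath-type actions).** Let a finite `p`-group `R` act on
`X = M₁ × ⋯ × M_t` (`t > 1`, all factors isomorphic to `M`), transitively permuting
the factors. Then `R` is subnormal in `G = X ⋊ R` iff `M` is a `p`-group. -/
theorem statement7 {p : ℕ} (hp : p.Prime) {R M ι : Type*} [Group R] [Group M]
    [Finite R] [Finite M] [Finite ι] [DecidableEq ι]
    (hRp : IsPGroup p R) (ht : 1 < Nat.card ι)
    (φ : R →* MulAut (ι → M)) (σ : R → Equiv.Perm ι)
    (hperm : ∀ (r : R) (i : ι),
      (MonoidHom.mulSingle (fun _ : ι => M) i).range.map (φ r).toMonoidHom =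
        (MonoidHom.mulSingle (fun _ : ι => M) (σ r i)).range)
    (htrans : ∀ i j : ι, ∃ r : R, σ r i = j) :
    Subnormal (SemidirectProduct.inr.range : Subgroup ((ι → M) ⋊[φ] R)) ⊤ ↔
      IsPGroup p M := by
  haveI := Fact.mk hp
  let e : ((ι → M) ⋊[φ] R) ≃ (ι → M) × R :=
    ⟨fun g => (g.left, g.right), fun q => ⟨q.1, q.2⟩, fun g => rfl, fun q => rfl⟩
  haveI : Finite ((ι → M) ⋊[φ] R) := Finite.of_equiv _ e.symm
  constructor
  · -- forward direction
    intro hsub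
    have hRrange : IsPGroup p (SemidirectProduct.inr.range :
        Subgroup ((ι → M) ⋊[φ] R)) :=
      hRp.of_surjective SemidirectProduct.inr.rangeRestrict
        SemidirectProduct.inr.rangeRestrict_surjective
    obtain ⟨n, c, h0, hl, hstep⟩ := hsub
    have hle : (SemidirectProduct.inr.range : Subgroup ((ι → M) ⋊[φ] R)) ≤
        opIn p (⊤ : Subgroup ((ι → M) ⋊[φ] R)) :=
      le_opIn_of_subnormal hRrange n ⊤ c h0 hl hstep
    have hNp : IsPGroup p (opIn p (⊤ : Subgroup ((ι → M) ⋊[φ] R))) := isPGroup_opIn p ⊤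
    have hNconj : ∀ g x : ((ι → M) ⋊[φ] R), x ∈ opIn p (⊤ : Subgroup ((ι → M) ⋊[φ] R)) →
        g * x * g⁻¹ ∈ opIn p (⊤ : Subgroup ((ι → M) ⋊[φ] R)) :=
      fun g x hx => (normalIn_opIn p ⊤).2 g trivial x hx
    haveI : Nontrivial ι := Finite.one_lt_card_iff_nontrivial.mp ht
    obtain ⟨i, j, hij⟩ := exists_pair_ne ι
    obtain ⟨r, hr⟩ := htrans i j
    intro m
    set s : ι → M := Pi.mulSingle i m with hs
    -- φ r s is supported at j
    have hmem : (φ r).toMonoidHom s ∈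
        (MonoidHom.mulSingle (fun _ : ι => M) i).range.map (φ r).toMonoidHom :=
      Subgroup.mem_map.mpr ⟨s, ⟨m, rfl⟩, rfl⟩
    rw [hperm r i, hr] at hmem
    obtain ⟨m', hm'⟩ := hmem
    have hφrs : φ r s = Pi.mulSingle j m' := hm'.symm
    -- the commutator lies in opIn
    have hmem1 : (SemidirectProduct.inr r : (ι → M) ⋊[φ] R) ∈
        opIn p (⊤ : Subgroup ((ι → M) ⋊[φ] R)) := hle ⟨r, rfl⟩
    have hx : (SemidirectProduct.inl (s * (φ r s)⁻¹) : (ι → M) ⋊[φ] R) ∈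
        opIn p (⊤ : Subgroup ((ι → M) ⋊[φ] R)) := by
      have h1 := hNconj (SemidirectProduct.inl s) _ hmem1
      have h2 := Subgroup.mul_mem _ h1
        (Subgroup.inv_mem _ hmem1)
      have eq1 : (SemidirectProduct.inl s : (ι → M) ⋊[φ] R) * SemidirectProduct.inr r *
          (SemidirectProduct.inl s)⁻¹ * (SemidirectProduct.inr r)⁻¹ =
          SemidirectProduct.inl (s * (φ r s)⁻¹) := by
        ext <;> simp [mul_assoc]
      rwa [eq1] at h2
    -- extract a p-power annihilating m
    obtain ⟨k, hk⟩ := hNp ⟨_, hx⟩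
    have hk' : (SemidirectProduct.inl (s * (φ r s)⁻¹) : (ι → M) ⋊[φ] R) ^ p ^ k = 1 := by
      have := congrArg Subtype.val hk
      simpa using this
    rw [← map_pow] at hk'
    have hpow : (s * (φ r s)⁻¹) ^ p ^ k = 1 := SemidirectProduct.inl_injective (by simpa using hk')
    have hval : (s * (φ r s)⁻¹) i = m := by
      have h1 : (φ r s) i = 1 := by
        rw [hφrs]
        exact Pi.mulSingle_eq_of_ne (M := fun _ : ι => M) hij m'
      rw [Pi.mul_apply, Pi.inv_apply, h1, inv_one, mul_one, hs, Pi.mulSingle_eq_same]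
    refine ⟨k, ?_⟩
    have := congrFun hpow i
    rwa [Pi.pow_apply, hval, Pi.one_apply] at this
  · -- backward direction
    intro hM
    obtain ⟨nM, hnM⟩ := IsPGroup.iff_card.mp hM
    have hX : IsPGroup p (ι → M) := by
      intro x
      refine ⟨nM, funext fun i => ?_⟩
      rw [Pi.pow_apply, Pi.one_apply, ← hnM]
      exact pow_card_eq_one'
    have hcard : Nat.card ((ι → M) ⋊[φ] R) = Nat.card (ι → M) * Nat.card R := by
      rw [Nat.card_congr e, Nat.card_prod]
    obtain ⟨a, ha⟩ := IsPGroup.iff_card.mp hX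
    obtain ⟨b, hb⟩ := IsPGroup.iff_card.mp hRp
    have hG : IsPGroup p ((ι → M) ⋊[φ] R) :=
      IsPGroup.iff_card.mpr ⟨a + b, by rw [hcard, ha, hb, pow_add]⟩
    haveI : Group.IsNilpotent ((ι → M) ⋊[φ] R) := hG.isNilpotent
    exact subnormal_top_of_normalizerCondition normalizerCondition_of_isNilpotent _
end

section
/- Let G be a finite group and let Q be a component of G. Suppose x ∈ G does not normalize Q. Then for every prime r dividing |Q|, there exists an r-element y ∈ E(G) such that the commutator [x,y] is a nontrivial r-element. -/
section AuxProof

open scoped commutatorElement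

private lemma conj_central {L : Type*} [Group L] (z a : L) (hz : z ∈ Subgroup.center L) :
    z⁻¹ * a * z = a := by
  have h := Subgroup.mem_center_iff.mp hz a
  rw [mul_assoc, h, ← mul_assoc, inv_mul_cancel, one_mul]

private lemma comm_left_central {L : Type*} [Group L] (n z b : L)
    (hz : z ∈ Subgroup.center L) : ⁅n * z, b⁆ = ⁅n, b⁆ := by
  have h : z * b * z⁻¹ = b := by
    have := conj_central z⁻¹ b (inv_mem hz); rwa [inv_inv] at this
  calc ⁅n * z, b⁆ = n * (z * b * z⁻¹) * n⁻¹ * b⁻¹ := by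
        simp only [commutatorElement_def, mul_inv_rev]; group
    _ = ⁅n, b⁆ := by rw [h, commutatorElement_def]

private lemma comm_right_central {L : Type*} [Group L] (a m w : L)
    (hw : w ∈ Subgroup.center L) : ⁅a, m * w⁆ = ⁅a, m⁆ := by
  have h : w * a⁻¹ * w⁻¹ = a⁻¹ := by
    have := conj_central w⁻¹ a⁻¹ (inv_mem hw); rwa [inv_inv] at this
  calc ⁅a, m * w⁆ = a * m * (w * a⁻¹ * w⁻¹) * m⁻¹ := by
        simp only [commutatorElement_def, mul_inv_rev]; group
    _ = ⁅a, m⁆ := by rw [h, commutatorElement_def]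

private lemma quasi_normal_cases {L : Type*} [Group L] (hq : IsQuasisimple L)
    {N : Subgroup L} (hN : N.Normal) : N ≤ Subgroup.center L ∨ N = ⊤ := by
  obtain ⟨hperf, hsimp⟩ := hq
  haveI := hsimp
  have hmapN : (Subgroup.map (QuotientGroup.mk' (Subgroup.center L)) N).Normal :=
    Subgroup.Normal.map hN _ (QuotientGroup.mk'_surjective _)
  rcases IsSimpleGroup.eq_bot_or_eq_top_of_normal _ hmapN with hb | ht
  · left
    have := (Subgroup.map_eq_bot_iff _).mp hb
    rwa [QuotientGroup.ker_mk'] at this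
  · right
    have hdecomp : ∀ g : L, ∃ n ∈ N, ∃ z ∈ Subgroup.center L, g = n * z := by
      intro g
      have hg : QuotientGroup.mk' (Subgroup.center L) g ∈
          Subgroup.map (QuotientGroup.mk' (Subgroup.center L)) N := ht ▸ Subgroup.mem_top _
      obtain ⟨n, hn, hng⟩ := Subgroup.mem_map.mp hg
      refine ⟨n, hn, n⁻¹ * g, ?_, by group⟩
      have h1 : QuotientGroup.mk' (Subgroup.center L) (n⁻¹ * g) = 1 := by
        rw [map_mul, map_inv, hng]; group
      have h2 := MonoidHom.mem_ker.mpr h1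
      rwa [QuotientGroup.ker_mk'] at h2
    have hle : commutator L ≤ N := by
      rw [commutator_def, Subgroup.commutator_le]
      intro g _ h _
      obtain ⟨n, hn, z, hz, rfl⟩ := hdecomp g
      obtain ⟨m, hm, w, hw, rfl⟩ := hdecomp h
      rw [comm_left_central _ _ _ hz, comm_right_central _ _ _ hw, commutatorElement_def]
      exact N.mul_mem (N.mul_mem (N.mul_mem hn hm) (N.inv_mem hn)) (N.inv_mem hm)
    exact top_le_iff.mp (hperf ▸ hle)

variable {G : Type*} [Group G]

private lemma perf_sub {L : Subgroup G} (hp : commutator ↥L = ⊤) : ⁅L, L⁆ = L := by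
  have h1 : Subgroup.map L.subtype ⊤ = L := by
    rw [← MonoidHom.range_eq_map, Subgroup.range_subtype]
  calc ⁅L, L⁆ = Subgroup.map L.subtype ⁅⊤, ⊤⁆ := by rw [Subgroup.map_commutator, h1]
    _ = L := by rw [← commutator_def, hp, h1]

private lemma normalin_quasi {L K : Subgroup G} (hq : IsQuasisimple ↥L)
    (hn : NormalIn K L) : L ≤ K ∨ ⁅L, K⁆ = ⊥ := by
  obtain ⟨hKL, hconj⟩ := hn
  have hN : (K.subgroupOf L).Normal := by
    constructor
    intro n hn' g
    rw [Subgroup.mem_subgroupOf] at hn' ⊢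
    simpa using hconj g g.2 n hn'
  rcases quasi_normal_cases hq hN with hc | ht
  · right
    rw [Subgroup.commutator_eq_bot_iff_le_centralizer]
    intro l hl
    rw [Subgroup.mem_centralizer_iff]
    intro k hk
    have hkL : k ∈ L := hKL hk
    have hmem : (⟨k, hkL⟩ : ↥L) ∈ K.subgroupOf L := Subgroup.mem_subgroupOf.mpr hk
    have hcent := Subgroup.mem_center_iff.mp (hc hmem) ⟨l, hl⟩
    have h2 : l * k = k * l := by
      have := Subtype.ext_iff.mp hcent
      simpa using this
    exact h2.symm
  · left
    intro l hl
    have : (⟨l, hl⟩ : ↥L) ∈ K.subgroupOf L := ht ▸ Subgroup.mem_top _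
    exact Subgroup.mem_subgroupOf.mp this

private def SN {G : Type*} [Group G] : ℕ → Subgroup G → Subgroup G → Prop
  | 0, L, M => L = M
  | n+1, L, M => ∃ K : Subgroup G, SN n L K ∧ NormalIn K M

private lemma sn_le : ∀ {n : ℕ} {L M : Subgroup G}, SN n L M → L ≤ M := by
  intro n
  induction n with
  | zero => intro L M h; exact le_of_eq h
  | succ n ih => rintro L M ⟨K, h1, h2⟩; exact (ih h1).trans h2.1

private lemma chain_to_sn : ∀ (n : ℕ) (c : Fin (n+1) → Subgroup G),
    (∀ i : Fin n, NormalIn (c i.castSucc) (c i.succ)) → SN n (c 0) (c (Fin.last n)) := by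
  intro n
  induction n with
  | zero => intro c _; rfl
  | succ n ih =>
    intro c hc
    refine ⟨c (Fin.last n).castSucc, ?_, ?_⟩
    · have h := ih (fun i => c i.castSucc) (fun i => by
        have h := hc i.castSucc
        rwa [Fin.succ_castSucc] at h)
      simpa using h
    · have h := hc (Fin.last n)
      rwa [Fin.succ_last] at h

private lemma subnormal_sn {L M : Subgroup G} (h : Subnormal L M) : ∃ n, SN n L M := by
  obtain ⟨n, c, h0, hl, hstep⟩ := h
  have := chain_to_sn n c hstep
  rw [h0, hl] at this
  exact ⟨n, this⟩

private lemma sn_subnormal : ∀ {n : ℕ} {L M : Subgroup G}, SN n L M → Subnormal L M := by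
  intro n
  induction n with
  | zero =>
    intro L M h
    exact ⟨0, fun _ => L, rfl, h, fun i => i.elim0⟩
  | succ n ih =>
    rintro L M ⟨K, hsn, hnorm⟩
    obtain ⟨m, c, hc0, hclast, hcstep⟩ := ih hsn
    refine ⟨m+1, Fin.snoc c M, ?_, ?_, ?_⟩
    · rw [← Fin.castSucc_zero, Fin.snoc_castSucc]; exact hc0
    · rw [Fin.snoc_last]
    · intro i
      refine Fin.lastCases ?_ ?_ i
      · rw [Fin.snoc_castSucc, Fin.succ_last, Fin.snoc_last, hclast]
        exact hnorm
      · intro j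
        rw [Fin.succ_castSucc, Fin.snoc_castSucc, Fin.snoc_castSucc]
        exact hcstep j

private lemma sn_inter : ∀ {n : ℕ} {L M K : Subgroup G}, SN n L M → L ≤ K → NormalIn K M →
    ∃ n', SN n' L K := by
  intro n
  induction n with
  | zero =>
    intro L M K h hLK hKM
    have hME : L = M := h
    subst hME
    exact ⟨0, le_antisymm hLK hKM.1⟩
  | succ n ih =>
    rintro L M K ⟨J, hJ, hJM⟩ hLK hKM
    have hJM' : J ≤ M := hJM.1
    have hnorm : NormalIn (J ⊓ K) J := by
      refine ⟨inf_le_left, ?_⟩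
      intro g hg k hk
      have hk' := Subgroup.mem_inf.mp hk
      exact Subgroup.mem_inf.mpr ⟨J.mul_mem (J.mul_mem hg hk'.1) (J.inv_mem hg),
        hKM.2 g (hJM' hg) k hk'.2⟩
    obtain ⟨n', hn'⟩ := ih hJ (le_inf (sn_le hJ) hLK) hnorm
    refine ⟨n' + 1, J ⊓ K, hn', inf_le_right, ?_⟩
    intro g hg k hk
    have hk' := Subgroup.mem_inf.mp hk
    exact Subgroup.mem_inf.mpr ⟨hJM.2 g (hKM.1 hg) k hk'.1,
      K.mul_mem (K.mul_mem hg hk'.2) (K.inv_mem hg)⟩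

private lemma sn_map {n : ℕ} {L M : Subgroup G} (φ : G ≃* G) (h : SN n L M) :
    SN n (Subgroup.map φ.toMonoidHom L) (Subgroup.map φ.toMonoidHom M) := by
  induction n generalizing L M with
  | zero => have hE : L = M := h; exact congrArg _ hE
  | succ n ih =>
    obtain ⟨K, h1, h2⟩ := h
    refine ⟨Subgroup.map φ.toMonoidHom K, ih h1, Subgroup.map_mono h2.1, ?_⟩
    intro g hg k hk
    obtain ⟨g0, hg0, rfl⟩ := Subgroup.mem_map.mp hg
    obtain ⟨k0, hk0, rfl⟩ := Subgroup.mem_map.mp hk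
    exact Subgroup.mem_map.mpr ⟨g0 * k0 * g0⁻¹, h2.2 g0 hg0 k0 hk0, by simp⟩

private lemma step_normal : ∀ (n : ℕ) {L M K : Subgroup G}, IsQuasisimple ↥L →
    SN n L M → NormalIn K M → L ≤ K ∨ ⁅L, K⁆ = ⊥ := by
  intro n
  induction n with
  | zero =>
    intro L M K hq hsn hK
    have hE : L = M := hsn
    subst hE
    exact normalin_quasi hq hK
  | succ n ih =>
    rintro L M K hq ⟨M', hsn', hM'⟩ hK
    have hKM : K ≤ M := hK.1
    have hM'M : M' ≤ M := hM'.1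
    have hK' : NormalIn (K ⊓ M') M' := by
      refine ⟨inf_le_right, ?_⟩
      intro g hg k hk
      have hk' := Subgroup.mem_inf.mp hk
      exact Subgroup.mem_inf.mpr ⟨hK.2 g (hM'M hg) k hk'.1,
        M'.mul_mem (M'.mul_mem hg hk'.2) (M'.inv_mem hg)⟩
    rcases ih hq hsn' hK' with h | h
    · exact Or.inl (h.trans inf_le_left)
    · right
      have hLM' : L ≤ M' := sn_le hsn'
      have hsub : ⁅L, K⁆ ≤ K ⊓ M' := by
        rw [Subgroup.commutator_le]
        intro l hl k hk
        rw [commutatorElement_def]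
        refine Subgroup.mem_inf.mpr ⟨?_, ?_⟩
        · exact K.mul_mem (hK.2 l (hM'M (hLM' hl)) k hk) (K.inv_mem hk)
        · have h2 : k * l⁻¹ * k⁻¹ ∈ M' := hM'.2 k (hKM hk) l⁻¹ (M'.inv_mem (hLM' hl))
          have h3 := M'.mul_mem (hLM' hl) h2
          have he : l * (k * l⁻¹ * k⁻¹) = l * k * l⁻¹ * k⁻¹ := by group
          rwa [he] at h3
      have h1 : ⁅⁅L, K⁆, L⁆ = ⊥ := by
        have hm := Subgroup.commutator_mono hsub (le_refl L)
        rwa [Subgroup.commutator_comm (K ⊓ M') L, h, le_bot_iff] at hm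
      have h2 : ⁅⁅K, L⁆, L⁆ = ⊥ := by rw [Subgroup.commutator_comm K L]; exact h1
      have h3 := Subgroup.commutator_commutator_eq_bot_of_rotate h1 h2
      rwa [perf_sub hq.1] at h3

private lemma components_T : ∀ (m : ℕ) {L M H : Subgroup G}, IsQuasisimple ↥L →
    (∃ n, SN n L M) → SN m H M → L ≤ H ∨ ⁅L, H⁆ = ⊥ := by
  intro m
  induction m with
  | zero =>
    intro L M H hq hL hH
    have hE : H = M := hH
    subst hE
    obtain ⟨n, hsn⟩ := hL
    exact Or.inl (sn_le hsn)
  | succ m ih =>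
    rintro L M H hq hL ⟨K, hHK, hKM⟩
    obtain ⟨n, hLn⟩ := hL
    rcases step_normal n hq hLn hKM with h | h
    · exact ih hq (sn_inter hLn h hKM) hHK
    · right
      have hm : ⁅L, H⁆ ≤ ⁅L, K⁆ := Subgroup.commutator_mono (le_refl L) (sn_le hHK)
      exact le_bot_iff.mp (h ▸ hm)

private lemma exists_noncentral_relement (Q : Type*) [Group Q] [Finite Q] {r : ℕ}
    (hr : r.Prime) (hdvd : r ∣ Nat.card Q) (hperf : commutator Q = ⊤) :
    ∃ y : Q, (∃ n, orderOf y = r ^ n) ∧ y ∉ Subgroup.center Q := by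
  by_contra hcon
  push_neg at hcon
  haveI : Fact r.Prime := ⟨hr⟩
  obtain ⟨S⟩ := (Sylow.nonempty : Nonempty (Sylow r Q))
  have hcard := Sylow.card_eq_multiplicity S
  have hSc : (S : Subgroup Q) ≤ Subgroup.center Q := by
    intro s hs
    obtain ⟨k, hk⟩ := S.2 ⟨s, hs⟩
    have hsk : s ^ r ^ k = 1 := by
      have := Subtype.ext_iff.mp hk
      simpa using this
    obtain ⟨j, _, hj⟩ := (Nat.dvd_prime_pow hr).mp (orderOf_dvd_of_pow_eq_one hsk)
    exact hcon s ⟨j, hj⟩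
  haveI hSnormal : (S : Subgroup Q).Normal := by
    constructor
    intro nn hn g
    have h1 := Subgroup.mem_center_iff.mp (hSc hn) g
    have h2 : g * nn * g⁻¹ = nn := by rw [h1]; group
    rw [h2]; exact hn
  obtain ⟨K, hK⟩ := Subgroup.exists_right_complement'_of_coprime (Sylow.card_coprime_index S)
  have hKtop : K = ⊤ := by
    have hcomm : commutator Q ≤ K := by
      rw [commutator_def, Subgroup.commutator_le]
      intro g _ h _
      obtain ⟨⟨s, k⟩, hsk, -⟩ := hK.existsUnique g
      obtain ⟨⟨s', k'⟩, hsk', -⟩ := hK.existsUnique h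
      subst hsk
      subst hsk'
      have hs : (s : Q) ∈ Subgroup.center Q := hSc s.2
      have hs' : (s' : Q) ∈ Subgroup.center Q := hSc s'.2
      rw [(Subgroup.mem_center_iff.mp hs (k : Q)).symm,
        (Subgroup.mem_center_iff.mp hs' (k' : Q)).symm,
        comm_left_central _ _ _ hs, comm_right_central _ _ _ hs', commutatorElement_def]
      exact K.mul_mem (K.mul_mem (K.mul_mem k.2 k'.2) (K.inv_mem k.2)) (K.inv_mem k'.2)
    rw [eq_top_iff, ← hperf]; exact hcomm
  have hSbot : (S : Subgroup Q) = ⊥ := Subgroup.isComplement'_top_right.mp (hKtop ▸ hK)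
  have h1 : Nat.card (S : Subgroup Q) = 1 := by rw [hSbot]; simp
  rw [hcard] at h1
  have hQ0 : Nat.card Q ≠ 0 := Nat.card_pos.ne'
  have hpos := hr.factorization_pos_of_dvd hQ0 hdvd
  have hdvd1 : r ∣ 1 := h1 ▸ dvd_pow_self r hpos.ne'
  exact hr.one_lt.ne' (Nat.dvd_one.mp hdvd1)

end AuxProof

/-- **Lemma.** If `Q` is a component of a finite group `G` and `x ∈ G` does not
normalize `Q`, then for every prime `r` dividing `|Q|` there is an `r`-element
`y ∈ E(G)` with `[x,y]` a nontrivial `r`-element. -/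
theorem statement8 {G : Type*} [Group G] [Finite G] (Q : Subgroup G)
    (hQ : IsComponent Q) (x : G) (hx : ¬ ∀ q ∈ Q, x * q * x⁻¹ ∈ Q)
    {r : ℕ} (hr : r.Prime) (hrdvd : r ∣ Nat.card Q) :
    ∃ y ∈ layer G, (∃ n : ℕ, orderOf y = r ^ n) ∧
      x⁻¹ * y⁻¹ * x * y ≠ 1 ∧ ∃ m : ℕ, orderOf (x⁻¹ * y⁻¹ * x * y) = r ^ m := by
  have hsub := hQ.1
  have hquasi := hQ.2
  obtain ⟨y₀, ⟨n, hn⟩, hync⟩ := exists_noncentral_relement ↥Q hr hrdvd hquasi.1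
  obtain ⟨u, hu⟩ : ∃ u : ↥Q, ¬ (u * y₀ = y₀ * u) := by
    by_contra hcu
    push_neg at hcu
    exact hync (Subgroup.mem_center_iff.mpr hcu)
  set φ : G ≃* G := (MulAut.conj x⁻¹ : MulAut G) with hφ
  have hφ_apply : ∀ g : G, φ.toMonoidHom g = x⁻¹ * g * x := by
    intro g; simp [hφ, MulAut.conj_apply]
  set P : Subgroup G := Subgroup.map φ.toMonoidHom Q with hPdef
  obtain ⟨nQ, hsnQ⟩ := subnormal_sn hsub
  have hsnP : SN nQ P (Subgroup.map φ.toMonoidHom ⊤) := sn_map φ hsnQ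
  have hmaptop : Subgroup.map φ.toMonoidHom ⊤ = ⊤ := by
    rw [← MonoidHom.range_eq_map]
    exact MonoidHom.range_eq_top.mpr φ.surjective
  rw [hmaptop] at hsnP
  have hPne : Q ≠ P := by
    intro hEq
    apply hx
    intro q hq
    have hqP : q ∈ P := hEq ▸ hq
    obtain ⟨q', hq', hq'e⟩ := Subgroup.mem_map.mp hqP
    rw [hφ_apply q'] at hq'e
    have h3 : x * q * x⁻¹ = q' := by rw [← hq'e]; group
    rw [h3]; exact hq'
  have hcomm : ⁅Q, P⁆ = ⊥ := by
    rcases components_T nQ hquasi ⟨nQ, hsnQ⟩ hsnP with h | h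
    · exfalso
      have hcards : Nat.card P = Nat.card Q :=
        (Nat.card_congr (Subgroup.equivMapOfInjective Q φ.toMonoidHom φ.injective).toEquiv).symm
      exact hPne (Subgroup.eq_of_le_of_card_ge h (le_of_eq hcards))
    · exact h
  have hcent := Subgroup.commutator_eq_bot_iff_le_centralizer.mp hcomm
  set y : G := (y₀ : G) with hy
  have hyQ : y ∈ Q := y₀.2
  have hyord : orderOf y = r ^ n := by
    rw [← hn]
    exact orderOf_injective Q.subtype Q.subtype_injective y₀
  have haP : x⁻¹ * y⁻¹ * x ∈ P :=
    Subgroup.mem_map.mpr ⟨y⁻¹, Q.inv_mem hyQ, by rw [hφ_apply]⟩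
  have hcy : Commute (x⁻¹ * y⁻¹ * x) y :=
    Subgroup.mem_centralizer_iff.mp (hcent hyQ) _ haP
  refine ⟨y, ?_, ⟨n, hyord⟩, ?_, ?_⟩
  · exact le_sSup (show Q ∈ {Q : Subgroup G | IsComponent Q} from hQ) hyQ
  · intro hone
    have hay : x⁻¹ * y⁻¹ * x = y⁻¹ := eq_inv_of_mul_eq_one_left hone
    have huQ : (u : G) ∈ Q := u.2
    have h2 := Subgroup.mem_centralizer_iff.mp (hcent huQ) _ haP
    rw [hay] at h2
    have hc : Commute y⁻¹ (u : G) := h2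
    have hc2 : Commute y (u : G) := inv_inv y ▸ hc.inv_left
    apply hu
    apply Subtype.ext
    have : (u : G) * y = y * u := hc2.symm
    simpa [hy] using this
  · have hda : orderOf (x⁻¹ * y⁻¹ * x) = r ^ n := by
      have he : x⁻¹ * y⁻¹ * x = φ.toMonoidHom y⁻¹ := (hφ_apply y⁻¹).symm
      rw [he, orderOf_injective φ.toMonoidHom φ.injective y⁻¹, orderOf_inv, hyord]
    have hdvd2 : orderOf (x⁻¹ * y⁻¹ * x * y) ∣ r ^ n := by
      have hlcm := hcy.orderOf_mul_dvd_lcm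
      rwa [hda, hyord, Nat.lcm_self] at hlcm
    obtain ⟨m, _, hm⟩ := (Nat.dvd_prime_pow hr).mp hdvd2
    exact ⟨m, hm⟩
end

section
/- Let G be a finite group and let χ be a nonlinear multiplicative irreducible complex character of G. If a, b ∈ G are nontrivial elements with coprime orders, then χ(a) = 0 or χ(b) = 0; in particular χ(ab) = 0. -/
open CategoryTheory

/-- **Theorem (i).** If `χ` is a nonlinear multiplicative irreducible complex character
of a finite group `G` and `a, b ∈ G` are nontrivial of coprime orders, then `χ(a) = 0`
or `χ(b) = 0`; in particular `χ(ab) = 0`. -/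
theorem statement16 {G : Type} [Group G] [Finite G] (V : FDRep ℂ G) [Simple V]
    (hnl : 1 < Module.finrank ℂ V)
    (hmult : ∀ x y : G, x ≠ 1 → y ≠ 1 → Nat.Coprime (orderOf x) (orderOf y) →
      V.character (x * y) = V.character x * V.character y)
    (a b : G) (ha : a ≠ 1) (hb : b ≠ 1)
    (hab : Nat.Coprime (orderOf a) (orderOf b)) :
    (V.character a = 0 ∨ V.character b = 0) ∧ V.character (a * b) = 0 := by
  classical
  have : Fintype G := Fintype.ofFinite G
  have key : V.character a * V.character b = 0 := by
    set T := ∑ g : G, V.ρ (g * b * g⁻¹) with hT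
    have hcomm : ∀ g : G, V.ρ g * T = T * V.ρ g := by
      intro g
      rw [hT, Finset.mul_sum, Finset.sum_mul]
      refine Fintype.sum_equiv (Equiv.mulLeft g) _ _ fun h => ?_
      rw [← map_mul, ← map_mul]
      congr 1
      simp [mul_assoc]
    let F : V ⟶ V := ⟨InducedCategory.homMk (ModuleCat.ofHom T), fun g => by
      ext1
      simp only [FGModuleCat.obj_carrier]
      exact (hcomm g).symm⟩
    obtain ⟨c, hc⟩ := CategoryTheory.endomorphism_simple_eq_smul_id (𝕜 := ℂ) F
    have hc' : c • LinearMap.id = T := by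
      have := congrArg (fun f : V ⟶ V => f.hom.hom.hom) hc
      exact this
    have hchar : ∀ g : G, LinearMap.trace ℂ V (V.ρ g) = V.character g := fun g => rfl
    have h1 : LinearMap.trace ℂ V T = (Fintype.card G : ℂ) * V.character b := by
      rw [hT, map_sum,
        Finset.sum_congr rfl fun g _ => (hchar (g * b * g⁻¹)).trans (V.char_conj b g)]
      rw [Finset.sum_const, Finset.card_univ, nsmul_eq_mul]
    have h2 : LinearMap.trace ℂ V T = c * (Module.finrank ℂ V : ℂ) := by
      rw [← hc', map_smul, LinearMap.trace_id, smul_eq_mul]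
    have h3 : LinearMap.trace ℂ V (V.ρ a * T) =
        (Fintype.card G : ℂ) * (V.character a * V.character b) := by
      rw [hT, Finset.mul_sum, map_sum]
      have step : ∀ g : G, LinearMap.trace ℂ V (V.ρ a * V.ρ (g * b * g⁻¹)) =
          V.character a * V.character b := by
        intro g
        have hne : g * b * g⁻¹ ≠ 1 := fun h => hb (conj_eq_one_iff.mp h)
        have hord : orderOf (g * b * g⁻¹) = orderOf b := by
          have := (MulAut.conj g).orderOf_eq b
          simpa [MulAut.conj_apply] using this
        have hm := hmult a (g * b * g⁻¹) ha hne (by rw [hord]; exact hab)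
        rw [← map_mul]
        calc LinearMap.trace ℂ V (V.ρ (a * (g * b * g⁻¹)))
            = V.character (a * (g * b * g⁻¹)) := rfl
          _ = V.character a * V.character (g * b * g⁻¹) := hm
          _ = V.character a * V.character b := by rw [V.char_conj b g]
      rw [Finset.sum_congr rfl fun g _ => step g, Finset.sum_const, Finset.card_univ,
        nsmul_eq_mul]
    have h4 : LinearMap.trace ℂ V (V.ρ a * T) = c * V.character a := by
      rw [← hc']
      have : V.ρ a * (c • LinearMap.id) = c • V.ρ a := by
        ext v; simp
      rw [this, map_smul, smul_eq_mul, hchar]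
    have hcard : (Fintype.card G : ℂ) ≠ 0 := Nat.cast_ne_zero.mpr Fintype.card_ne_zero
    set d : ℂ := (Module.finrank ℂ V : ℂ) with hd
    have hd1 : d ≠ 1 := by
      rw [hd]
      intro h
      have h' : ((Module.finrank ℂ V : ℕ) : ℂ) = ((1 : ℕ) : ℂ) := by simpa using h
      have := Nat.cast_injective (R := ℂ) h'
      omega
    have e1 : (Fintype.card G : ℂ) * V.character b = c * d := by rw [← h1, h2]
    have e2 : (Fintype.card G : ℂ) * (V.character a * V.character b) = c * V.character a := by
      rw [← h3, h4]
    have e4 : (Fintype.card G : ℂ) * (V.character a * V.character b) * (d - 1) = 0 := by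
      have e3 : (Fintype.card G : ℂ) * (V.character a * V.character b) * d
          = (Fintype.card G : ℂ) * V.character b * V.character a := by
        rw [e2, e1]; ring
      linear_combination e3
    rcases mul_eq_zero.mp e4 with h | h
    · rcases mul_eq_zero.mp h with h' | h'
      · exact absurd h' hcard
      · exact h'
    · exact absurd (by linear_combination h) hd1
  refine ⟨mul_eq_zero.mp key, ?_⟩
  rw [hmult a b ha hb hab, key]
end
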